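/- Let n ≥ 1, let ρ_i be a d_i-dimensional quantum state for each i ∈ Fin n, and let ϱ be the product state on K = Π i, Fin (d i) with entries ϱ(a,b) = ∏_i ρ_i(a i, b i). Then for every Hermitian matrix X indexed by K and every i ∈ Fin n: Tr[ϱ·(D_i X)²] = Tr[(ϱ⊗ϱ)·(1/2)·(X⊗Id − F_i (X⊗Id) F_i)²] = Tr[ϱ·X²] − Tr[(ϱ⊗ϱ)·(X⊗Id)·F_i·(X⊗Id)·F_i], where ϱ⊗ϱ and X⊗Id are matrices on K × K with (ϱ⊗ϱ)((a,a'),(b,b')) = ϱ(a,b)·ϱ(a',b') and (X⊗Id)((a,a'),(b,b')) = X(a,b) if a' = b' and 0 otherwise. -/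

import Mathlib

open scoped BigOperators ComplexOrder

noncomputable section

/-- A `d`-dimensional quantum state: positive semidefinite with trace 1. -/
def IsState {d : ℕ} (ρ : Matrix (Fin d) (Fin d) ℂ) : Prop :=
  ρ.PosSemidef ∧ ρ.trace = 1

/-- The product state `ρ₁ ⊗ ⋯ ⊗ ρ_n` on `K = Π i, Fin (dim i)`. -/
def prodState {n : ℕ} {dim : Fin n → ℕ}
    (ρ : ∀ i, Matrix (Fin (dim i)) (Fin (dim i)) ℂ) :
    Matrix (∀ j, Fin (dim j)) (∀ j, Fin (dim j)) ℂ :=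
  fun a b => ∏ i, ρ i (a i) (b i)

/-- Marginalization of the `i`-th component: `E_i X = Tr_i[ρ_i X] ⊗ Id_i`. -/
def Emap {n : ℕ} {dim : Fin n → ℕ}
    (ρ : ∀ i, Matrix (Fin (dim i)) (Fin (dim i)) ℂ) (i : Fin n)
    (X : Matrix (∀ j, Fin (dim j)) (∀ j, Fin (dim j)) ℂ) :
    Matrix (∀ j, Fin (dim j)) (∀ j, Fin (dim j)) ℂ :=
  fun a b =>
    if a i = b i then
      ∑ e, ∑ c, ρ i e c * X (Function.update a i c) (Function.update b i e)
    else 0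

/-- `D_i X = X - E_i X`. -/
def Dmap {n : ℕ} {dim : Fin n → ℕ}
    (ρ : ∀ i, Matrix (Fin (dim i)) (Fin (dim i)) ℂ) (i : Fin n)
    (X : Matrix (∀ j, Fin (dim j)) (∀ j, Fin (dim j)) ℂ) :
    Matrix (∀ j, Fin (dim j)) (∀ j, Fin (dim j)) ℂ :=
  X - Emap ρ i X

/-- `ϱ ⊗ ϱ` on the doubled space `K × K`. -/
def tensorSq {K : Type*} (ϱ : Matrix K K ℂ) : Matrix (K × K) (K × K) ℂ :=
  fun x y => ϱ x.1 y.1 * ϱ x.2 y.2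

/-- `X ⊗ Id` on the doubled space `K × K`. -/
def tensId {K : Type*} [DecidableEq K] (X : Matrix K K ℂ) : Matrix (K × K) (K × K) ℂ :=
  fun x y => if x.2 = y.2 then X x.1 y.1 else 0

/-- The swap `F_i` of the `i`-th component of the first half with the
`i`-th component of the second half. -/
def Fswap {n : ℕ} {dim : Fin n → ℕ} (i : Fin n) :
    Matrix ((∀ j, Fin (dim j)) × (∀ j, Fin (dim j)))
           ((∀ j, Fin (dim j)) × (∀ j, Fin (dim j))) ℂ :=
  fun x y =>
    if y.1 = Function.update x.1 i (x.2 i) ∧ y.2 = Function.update x.2 i (x.1 i)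
    then 1 else 0

open Finset

namespace QLV

abbrev Kt (n : ℕ) (dim : Fin n → ℕ) := ∀ j, Fin (dim j)
abbrev KK (n : ℕ) (dim : Fin n → ℕ) := Kt n dim × Kt n dim

variable {n : ℕ} {dim : Fin n → ℕ}

def σe (i : Fin n) : KK n dim ≃ KK n dim where
  toFun x := (Function.update x.1 i (x.2 i), Function.update x.2 i (x.1 i))
  invFun x := (Function.update x.1 i (x.2 i), Function.update x.2 i (x.1 i))
  left_inv x := by simp [Function.update_idem]
  right_inv x := by simp [Function.update_idem]

lemma σe_σe (i : Fin n) (x : KK n dim) : σe i (σe i x) = x := by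
  simp [σe, Function.update_idem]

lemma Fswap_apply (i : Fin n) (x y : KK n dim) :
    Fswap i x y = if y = σe i x then 1 else 0 := by
  simp [Fswap, σe, Prod.ext_iff]

lemma Fswap_apply' (i : Fin n) (x y : KK n dim) :
    Fswap i x y = if x = σe i y then 1 else 0 := by
  rw [Fswap_apply]
  congr 1
  rw [eq_iff_iff]
  constructor
  · rintro rfl; exact (σe_σe i x).symm
  · rintro rfl; exact (σe_σe i y).symm

lemma mul_Fswap (i : Fin n) (M : Matrix (KK n dim) (KK n dim) ℂ)
    (x y : KK n dim) :
    (M * Fswap i : Matrix (KK n dim) (KK n dim) ℂ) x y = M x (σe i y) := by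
  simp only [Matrix.mul_apply, Fswap_apply']
  simp

lemma Fswap_mul (i : Fin n) (M : Matrix (KK n dim) (KK n dim) ℂ)
    (x y : KK n dim) :
    (Fswap i * M : Matrix (KK n dim) (KK n dim) ℂ) x y = M (σe i x) y := by
  simp only [Matrix.mul_apply, Fswap_apply]
  simp [eq_comm]

lemma Fswap_Fswap (i : Fin n) :
    (Fswap i * Fswap i : Matrix (KK n dim) (KK n dim) ℂ) = 1 := by
  ext x y
  rw [Fswap_mul, Fswap_apply]
  rw [Matrix.one_apply, σe_σe]
  simp [eq_comm]

lemma tensId_mul_tensId {K : Type*} [DecidableEq K] [Fintype K] (A B : Matrix K K ℂ) :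
    tensId A * tensId B = tensId (A * B) := by
  ext ⟨a, a'⟩ ⟨b, b'⟩
  simp only [tensId, Matrix.mul_apply, Fintype.sum_prod_type, ite_mul, zero_mul, mul_ite,
    mul_zero]
  by_cases h : a' = b'
  · subst h
    simp [Finset.sum_ite_eq]
  · simp only [h, if_false]
    apply Finset.sum_eq_zero
    intro c _
    apply Finset.sum_eq_zero
    intro c' _
    by_cases h1 : a' = c' <;> by_cases h2 : c' = b' <;> simp_all

end QLV


namespace QLV2
open QLV

variable {n : ℕ} {dim : Fin n → ℕ} (ρ : ∀ i, Matrix (Fin (dim i)) (Fin (dim i)) ℂ)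

def Rmat (i : Fin n) (a b : Kt n dim) : ℂ := ∏ j ∈ univ.erase i, ρ j (a j) (b j)

lemma prodState_eq (i : Fin n) (a b : Kt n dim) :
    prodState ρ a b = ρ i (a i) (b i) * Rmat ρ i a b :=
  (Finset.mul_prod_erase univ _ (mem_univ i)).symm

lemma Rmat_update_left (i : Fin n) (t : Fin (dim i)) (a b : Kt n dim) :
    Rmat ρ i (Function.update a i t) b = Rmat ρ i a b :=
  Finset.prod_congr rfl fun j hj => by
    rw [Function.update_of_ne (mem_erase.1 hj).1]

lemma Rmat_update_right (i : Fin n) (t : Fin (dim i)) (a b : Kt n dim) :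
    Rmat ρ i a (Function.update b i t) = Rmat ρ i a b :=
  Finset.prod_congr rfl fun j hj => by
    rw [Function.update_of_ne (mem_erase.1 hj).1]

lemma prod_update_left (i : Fin n) (t : Fin (dim i)) (a b : Kt n dim) :
    prodState ρ (Function.update a i t) b = ρ i t (b i) * Rmat ρ i a b := by
  rw [prodState_eq ρ i, Function.update_self, Rmat_update_left]

lemma prod_update_right (i : Fin n) (t : Fin (dim i)) (a b : Kt n dim) :
    prodState ρ a (Function.update b i t) = ρ i (a i) t * Rmat ρ i a b := by
  rw [prodState_eq ρ i, Function.update_self, Rmat_update_right]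

lemma sum_pi (u : ∀ j, Fin (dim j) → ℂ) :
    ∑ a : Kt n dim, ∏ j, u j (a j) = ∏ j, ∑ x, u j x := by
  rw [Finset.prod_univ_sum]
  rw [Fintype.piFinset_univ]

lemma sum_pi_erase (i : Fin n) (v : Fin (dim i) → ℂ) (w : ∀ j, Fin (dim j) → ℂ) :
    ∑ a : Kt n dim, v (a i) * ∏ j ∈ univ.erase i, w j (a j)
      = (∑ x, v x) * ∏ j ∈ univ.erase i, (∑ x, w j x) := by
  classical
  have h1 : ∀ a : Kt n dim, v (a i) * ∏ j ∈ univ.erase i, w j (a j)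
      = ∏ j, Function.update w i v j (a j) := by
    intro a
    rw [← Finset.mul_prod_erase univ _ (mem_univ i), Function.update_self]
    congr 1
    exact Finset.prod_congr rfl fun j hj => by
      rw [Function.update_of_ne (mem_erase.1 hj).1]
  simp_rw [h1]
  rw [sum_pi]
  rw [← Finset.mul_prod_erase univ (fun j => ∑ x, Function.update w i v j x) (mem_univ i),
    Function.update_self]
  congr 1
  exact Finset.prod_congr rfl fun j hj => by
    rw [Function.update_of_ne (mem_erase.1 hj).1]

variable (htr : ∀ j, (ρ j).trace = 1)
include htr

lemma erase_trace_one (i : Fin n) : (∏ j ∈ univ.erase i, ∑ x, ρ j x x) = 1 := by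
  apply Finset.prod_eq_one
  intro j _
  exact htr j

lemma traceϱ : (prodState ρ).trace = 1 := by
  have : (prodState ρ).trace = ∑ a : Kt n dim, ∏ j, ρ j (a j) (a j) := rfl
  rw [this, sum_pi (fun j x => ρ j x x)]
  apply Finset.prod_eq_one
  intro j _
  exact htr j

lemma marg_right (i : Fin n) (s : Fin (dim i)) (g : Fin (dim i) → ℂ) :
    ∑ a : Kt n dim, prodState ρ a (Function.update a i s) * g (a i)
      = ∑ t, ρ i t s * g t := by
  have h1 : ∀ a : Kt n dim, prodState ρ a (Function.update a i s) * g (a i)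
      = (ρ i (a i) s * g (a i)) * ∏ j ∈ univ.erase i, ρ j (a j) (a j) := by
    intro a
    rw [prod_update_right]
    unfold Rmat; ring
  simp_rw [h1]
  rw [sum_pi_erase i (fun x => ρ i x s * g x) (fun j x => ρ j x x), erase_trace_one ρ htr, mul_one]

lemma marg_left (i : Fin n) (s : Fin (dim i)) (g : Fin (dim i) → ℂ) :
    ∑ a : Kt n dim, prodState ρ (Function.update a i s) a * g (a i)
      = ∑ t, ρ i s t * g t := by
  have h1 : ∀ a : Kt n dim, prodState ρ (Function.update a i s) a * g (a i)
      = (ρ i s (a i) * g (a i)) * ∏ j ∈ univ.erase i, ρ j (a j) (a j) := by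
    intro a
    rw [prod_update_left]
    unfold Rmat; ring
  simp_rw [h1]
  rw [sum_pi_erase i (fun x => ρ i s x * g x) (fun j x => ρ j x x), erase_trace_one ρ htr, mul_one]

lemma lam_collapse (i : Fin n) (a b : Kt n dim) :
    ∑ e : Fin (dim i), prodState ρ (Function.update a i e) (Function.update b i e)
      = Rmat ρ i a b := by
  have h1 : ∀ e, prodState ρ (Function.update a i e) (Function.update b i e)
      = ρ i e e * Rmat ρ i a b := by
    intro e
    rw [prod_update_left, Function.update_self, Rmat_update_right]
  simp_rw [h1, ← Finset.sum_mul]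
  have : ∑ e : Fin (dim i), ρ i e e = 1 := htr i
  rw [this, one_mul]

end QLV2

namespace QLV3
open QLV QLV2

variable {n : ℕ} {dim : Fin n → ℕ}

/-- involutive reindexing equiv on `K × Fin (dim i)`. -/
def updE (i : Fin n) : (Kt n dim × Fin (dim i)) ≃ (Kt n dim × Fin (dim i)) where
  toFun p := (Function.update p.1 i p.2, p.1 i)
  invFun p := (Function.update p.1 i p.2, p.1 i)
  left_inv p := by simp [Function.update_idem]
  right_inv p := by simp [Function.update_idem]

lemma inv_reindex (i : Fin n) (H : Kt n dim → Fin (dim i) → ℂ) :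
    ∑ c : Kt n dim, ∑ f, H c f
      = ∑ c : Kt n dim, ∑ f, H (Function.update c i f) (c i) := by
  rw [← Fintype.sum_prod_type' H, ← Fintype.sum_prod_type' (fun c f => H (Function.update c i f) (c i))]
  exact (Equiv.sum_comp (updE i) (fun p => H p.1 p.2)).symm

variable (ρ : ∀ i, Matrix (Fin (dim i)) (Fin (dim i)) ℂ)

lemma tensorSq_swap (i : Fin n) (x y : KK n dim) :
    tensorSq (prodState ρ) (σe i x) y = tensorSq (prodState ρ) x (σe i y) := by
  rcases x with ⟨a, a'⟩
  rcases y with ⟨b, b'⟩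
  simp only [tensorSq, σe, Equiv.coe_fn_mk]
  rw [prod_update_left, prod_update_left, prod_update_right, prod_update_right]
  ring

lemma Fswap_comm_tensorSq (i : Fin n) :
    (Fswap i * tensorSq (prodState ρ) : Matrix (KK n dim) (KK n dim) ℂ)
      = tensorSq (prodState ρ) * Fswap i := by
  ext x y
  rw [Fswap_mul, mul_Fswap]
  exact tensorSq_swap ρ i x y

lemma trace_tensorSq_tensId (Y : Matrix (Kt n dim) (Kt n dim) ℂ) :
    (tensorSq (prodState ρ) * tensId Y).trace
      = (prodState ρ * Y).trace * (prodState ρ).trace := by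
  simp only [Matrix.trace, Matrix.diag, Matrix.mul_apply, tensorSq, tensId,
    Fintype.sum_prod_type, mul_ite, mul_zero, Finset.sum_ite_eq, Finset.sum_ite_eq',
    Finset.mem_univ, if_true]
  rw [Finset.sum_mul]
  apply Finset.sum_congr rfl; intro x _
  rw [Finset.sum_mul_sum]
  rw [Finset.sum_comm]
  apply Finset.sum_congr rfl; intro x1 _
  apply Finset.sum_congr rfl; intro x2 _
  ring

lemma trace_mul3 {m : Type*} [Fintype m] (A B C : Matrix m m ℂ) :
    (A * (B * C)).trace = ∑ a, ∑ b, ∑ c, A a b * (B b c * C c a) := by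
  simp only [Matrix.trace, Matrix.diag, Matrix.mul_apply, Finset.mul_sum]

end QLV3

namespace QLV4
open QLV QLV2 QLV3

variable {n : ℕ} {dim : Fin n → ℕ} (ρ : ∀ i, Matrix (Fin (dim i)) (Fin (dim i)) ℂ)

lemma sum_rotate {α β γ : Type*} [Fintype α] [Fintype β] [Fintype γ] (g : α → β → γ → ℂ) :
    ∑ x, ∑ y, ∑ z, g x y z = ∑ y, ∑ z, ∑ x, g x y z := by
  rw [Finset.sum_comm]
  exact Finset.sum_congr rfl fun _ _ => Finset.sum_comm

lemma trace_mul3_zxy {m : Type*} [Fintype m] (A B C : Matrix m m ℂ) :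
    (A * (B * C)).trace = ∑ x, ∑ z, ∑ y, A x y * (B y z * C z x) := by
  rw [trace_mul3]
  exact Finset.sum_congr rfl fun x _ => Finset.sum_comm

variable (htr : ∀ j, (ρ j).trace = 1) (X : Matrix (Kt n dim) (Kt n dim) ℂ) (i : Fin n)

def T1 : ℂ := ∑ a : Kt n dim, ∑ b : Kt n dim, ∑ c : Kt n dim, ∑ e : Fin (dim i),
    prodState ρ a b * (ρ i e (c i) * (X b (Function.update c i (a i)) * X c (Function.update a i e)))

lemma A_eq_T1 : (prodState ρ * (X * Emap ρ i X)).trace = T1 ρ X i := by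
  rw [trace_mul3]
  unfold T1
  apply Finset.sum_congr rfl; intro a _
  apply Finset.sum_congr rfl; intro b _
  have step1 : ∀ c : Kt n dim,
      prodState ρ a b * (X b c * Emap ρ i X c a)
      = ∑ f : Fin (dim i), (if c i = a i then
          prodState ρ a b * (X b c * ∑ e, ρ i e f * X (Function.update c i f) (Function.update a i e)) else 0) := by
    intro c
    unfold Emap
    by_cases h : c i = a i
    · simp only [h, if_true, Finset.mul_sum]
      rw [Finset.sum_comm]
    · simp [h]
  simp_rw [step1]
  rw [inv_reindex i]
  simp only [Function.update_self, Function.update_idem, Function.update_eq_self]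
  simp only [Finset.sum_ite_eq', Finset.mem_univ, if_true]
  apply Finset.sum_congr rfl; intro c _
  simp only [Finset.mul_sum]
  apply Finset.sum_congr rfl; intro e _
  ring

include htr in
lemma C_eq_T1 :
    (tensorSq (prodState ρ) * (tensId X * Fswap i * tensId X * Fswap i)).trace = T1 ρ X i := by
  rw [show tensId X * Fswap i * tensId X * Fswap i
      = (tensId X * Fswap i) * (tensId X * Fswap i) from mul_assoc _ _ _]
  rw [trace_mul3_zxy]
  simp only [mul_Fswap]
  simp only [Fintype.sum_prod_type, tensorSq, σe, Equiv.coe_fn_mk]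
  unfold tensId
  simp only [mul_ite, ite_mul, mul_zero, zero_mul, Finset.sum_ite_irrel, Finset.sum_const_zero,
    Finset.sum_ite_eq', Finset.mem_univ, if_true, Function.update_self, Function.update_idem]
  apply Finset.sum_congr rfl; intro a _
  rw [sum_rotate]
  rw [Finset.sum_comm]
  apply Finset.sum_congr rfl; intro b _
  apply Finset.sum_congr rfl; intro c _
  have rearr : ∀ a' : Kt n dim,
      prodState ρ a b * prodState ρ a' (Function.update a' i (c i)) *
        (X b (Function.update c i (a i)) * X c (Function.update a i (a' i)))
      = prodState ρ a' (Function.update a' i (c i)) *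
          (prodState ρ a b * (X b (Function.update c i (a i)) * X c (Function.update a i (a' i)))) := by
    intro a'; ring
  simp_rw [rearr]
  rw [marg_right ρ htr i (c i)
    (fun t => prodState ρ a b * (X b (Function.update c i (a i)) * X c (Function.update a i t)))]
  apply Finset.sum_congr rfl; intro e _
  ring

def T2 : ℂ := ∑ b : Kt n dim, ∑ c : Kt n dim, ∑ a : Kt n dim, ∑ f : Fin (dim i),
    prodState ρ a b * (ρ i (c i) f * (X (Function.update b i f) c * X (Function.update c i (b i)) a))

lemma B_eq_T2 : (prodState ρ * (Emap ρ i X * X)).trace = T2 ρ X i := by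
  rw [trace_mul3]
  have step1 : ∀ a b c : Kt n dim,
      prodState ρ a b * (Emap ρ i X b c * X c a)
      = ∑ e : Fin (dim i), (if b i = c i then
          prodState ρ a b * ((∑ f, ρ i e f * X (Function.update b i f) (Function.update c i e)) * X c a) else 0) := by
    intro a b c
    unfold Emap
    by_cases h : b i = c i
    · simp only [h, if_true, Finset.sum_mul, Finset.mul_sum]
    · simp [h]
  simp_rw [step1]
  unfold T2
  rw [sum_rotate]
  apply Finset.sum_congr rfl; intro b _
  refine (Finset.sum_congr rfl fun c _ => Finset.sum_comm).trans ?_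
  rw [inv_reindex i (fun c e => ∑ a : Kt n dim, if b i = c i then
      prodState ρ a b * ((∑ f, ρ i e f * X (Function.update b i f) (Function.update c i e)) * X c a) else 0)]
  simp only [Function.update_self, Function.update_idem, Function.update_eq_self]
  apply Finset.sum_congr rfl; intro c _
  rw [Finset.sum_comm]
  simp only [Finset.sum_ite_eq, Finset.mem_univ, if_true]
  have push : ∀ a : Kt n dim,
      prodState ρ a b * ((∑ f, ρ i (c i) f * X (Function.update b i f) c) * X (Function.update c i (b i)) a)
      = ∑ f, prodState ρ a b * (ρ i (c i) f * (X (Function.update b i f) c * X (Function.update c i (b i)) a)) := by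
    intro a
    simp only [Finset.sum_mul, Finset.mul_sum]
    exact Finset.sum_congr rfl fun f _ => by ring
  simp_rw [push]

include htr in
lemma Cpp_eq_T2 :
    ((Fswap i * tensId X) * ((Fswap i * tensId X) * tensorSq (prodState ρ))).trace = T2 ρ X i := by
  rw [trace_mul3]
  simp only [Fswap_mul]
  simp only [Fintype.sum_prod_type, tensorSq, σe, Equiv.coe_fn_mk]
  unfold tensId
  simp only [mul_ite, ite_mul, mul_zero, zero_mul, Finset.sum_ite_irrel, Finset.sum_const_zero,
    Finset.sum_ite_eq, Finset.sum_ite_eq', Finset.mem_univ, if_true, Function.update_self,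
    Function.update_idem]
  unfold T2
  apply Finset.sum_congr rfl; intro b _
  rw [sum_rotate]
  apply Finset.sum_congr rfl; intro c _
  apply Finset.sum_congr rfl; intro a _
  have rearr : ∀ x : Kt n dim,
      X (Function.update b i (x i)) c *
        (X (Function.update c i (b i)) a * (prodState ρ a b * prodState ρ (Function.update x i (c i)) x))
      = prodState ρ (Function.update x i (c i)) x *
          (X (Function.update b i (x i)) c * (X (Function.update c i (b i)) a * prodState ρ a b)) := by
    intro x; ring
  simp_rw [rearr]
  rw [marg_left ρ htr i (c i)
    (fun t => X (Function.update b i t) c * (X (Function.update c i (b i)) a * prodState ρ a b))]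
  apply Finset.sum_congr rfl; intro f _
  ring

def T3 : ℂ := ∑ a : Kt n dim, ∑ b : Kt n dim, ∑ c : Kt n dim, ∑ e : Fin (dim i),
    Rmat ρ i a b * (ρ i e (b i) * (ρ i (a i) (c i) * (X b (Function.update c i e) * X c a)))

include htr in
lemma D_stage1 : (prodState ρ * (Emap ρ i X * Emap ρ i X)).trace
    = ∑ a : Kt n dim, ∑ b : Kt n dim, ∑ c : Kt n dim,
        prodState ρ a (Function.update b i (a i)) *
          ((∑ e, ρ i e (b i) * X b (Function.update c i e)) *
            (∑ e', ρ i e' (c i) * X c (Function.update a i e'))) := by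
  rw [trace_mul3]
  apply Finset.sum_congr rfl; intro a _
  have step1 : ∀ b c : Kt n dim,
      prodState ρ a b * (Emap ρ i X b c * Emap ρ i X c a)
      = ∑ f : Fin (dim i), (if b i = c i then
          prodState ρ a b * ((∑ e, ρ i e f * X (Function.update b i f) (Function.update c i e))
            * Emap ρ i X c a) else 0) := by
    intro b c
    by_cases h : b i = c i
    · conv_lhs => rw [Emap]
      simp only [h, if_true, Finset.sum_mul, Finset.mul_sum]
      rw [Finset.sum_comm]
    · conv_lhs => rw [Emap]
      simp [h]
  simp_rw [step1]
  refine (Finset.sum_congr rfl fun b _ => Finset.sum_comm).trans ?_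
  rw [inv_reindex i (fun b f => ∑ c : Kt n dim, if b i = c i then
      prodState ρ a b * ((∑ e, ρ i e f * X (Function.update b i f) (Function.update c i e))
        * Emap ρ i X c a) else 0)]
  simp only [Function.update_self, Function.update_idem, Function.update_eq_self]
  refine (Finset.sum_congr rfl fun b _ => Finset.sum_comm).trans ?_
  simp only [Finset.sum_ite_eq', Finset.mem_univ, if_true]
  apply Finset.sum_congr rfl; intro b _
  have step2 : ∀ c : Kt n dim,
      prodState ρ a (Function.update b i (c i)) *
        ((∑ e, ρ i e (b i) * X b (Function.update c i e)) * Emap ρ i X c a)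
      = ∑ f' : Fin (dim i), (if c i = a i then
          prodState ρ a (Function.update b i (c i)) *
            ((∑ e, ρ i e (b i) * X b (Function.update c i e)) *
              (∑ e', ρ i e' f' * X (Function.update c i f') (Function.update a i e'))) else 0) := by
    intro c
    by_cases h : c i = a i
    · conv_lhs => rw [Emap]
      simp only [h, if_true, Finset.mul_sum, Finset.sum_mul]
      rw [Finset.sum_comm]
    · conv_lhs => rw [Emap]
      simp [h]
  simp_rw [step2]
  rw [inv_reindex i (fun c f' => if c i = a i then
      prodState ρ a (Function.update b i (c i)) *
        ((∑ e, ρ i e (b i) * X b (Function.update c i e)) *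
          (∑ e', ρ i e' f' * X (Function.update c i f') (Function.update a i e'))) else 0)]
  simp only [Function.update_self, Function.update_idem, Function.update_eq_self]
  simp only [Finset.sum_ite_eq', Finset.mem_univ, if_true]

include htr in
lemma D_eq_T3 : (prodState ρ * (Emap ρ i X * Emap ρ i X)).trace = T3 ρ X i := by
  rw [D_stage1 ρ htr X i]
  have step3 : ∀ a : Kt n dim, (∑ b : Kt n dim, ∑ c : Kt n dim,
      prodState ρ a (Function.update b i (a i)) *
        ((∑ e, ρ i e (b i) * X b (Function.update c i e)) *
          (∑ e', ρ i e' (c i) * X c (Function.update a i e'))))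
      = ∑ e' : Fin (dim i), ∑ b : Kt n dim, ∑ c : Kt n dim,
          prodState ρ a (Function.update b i (a i)) *
            ((∑ e, ρ i e (b i) * X b (Function.update c i e)) *
              (ρ i e' (c i) * X c (Function.update a i e'))) := by
    intro a
    simp only [Finset.mul_sum]
    rw [← sum_rotate]
  simp_rw [step3]
  rw [inv_reindex i (fun a e' => ∑ b : Kt n dim, ∑ c : Kt n dim,
      prodState ρ a (Function.update b i (a i)) *
        ((∑ e, ρ i e (b i) * X b (Function.update c i e)) *
          (ρ i e' (c i) * X c (Function.update a i e'))))]
  simp only [Function.update_self, Function.update_idem, Function.update_eq_self]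
  unfold T3
  apply Finset.sum_congr rfl; intro a _
  rw [sum_rotate]
  apply Finset.sum_congr rfl; intro b _
  apply Finset.sum_congr rfl; intro c _
  have rearr : ∀ e' : Fin (dim i),
      prodState ρ (Function.update a i e') (Function.update b i e') *
        ((∑ e, ρ i e (b i) * X b (Function.update c i e)) * (ρ i (a i) (c i) * X c a))
      = prodState ρ (Function.update a i e') (Function.update b i e') *
          ((∑ e, ρ i e (b i) * X b (Function.update c i e)) * (ρ i (a i) (c i) * X c a)) := fun _ => rfl
  rw [← Finset.sum_mul]
  rw [lam_collapse ρ htr i a b]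
  simp only [Finset.sum_mul, Finset.mul_sum]
  apply Finset.sum_congr rfl; intro e _
  ring

def Mform : ℂ := ∑ a : Kt n dim, ∑ b : Kt n dim, ∑ c : Kt n dim, ∑ t : Fin (dim i),
    (ρ i (a i) t * Rmat ρ i a b) * (ρ i (c i) (b i) * (X b c * X (Function.update c i t) a))

lemma T3_eq_M : T3 ρ X i = Mform ρ X i := by
  unfold T3 Mform
  apply Finset.sum_congr rfl; intro a _
  apply Finset.sum_congr rfl; intro b _
  rw [inv_reindex i (fun c e => Rmat ρ i a b *
      (ρ i e (b i) * (ρ i (a i) (c i) * (X b (Function.update c i e) * X c a))))]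
  simp only [Function.update_self, Function.update_idem, Function.update_eq_self]
  apply Finset.sum_congr rfl; intro c _
  apply Finset.sum_congr rfl; intro e _
  ring

lemma T2_eq_M : T2 ρ X i = Mform ρ X i := by
  unfold T2
  simp_rw [prodState_eq ρ i]
  refine (Finset.sum_congr rfl fun b _ => (sum_rotate (fun f c a =>
      (ρ i (a i) (b i) * Rmat ρ i a b) *
        (ρ i (c i) f * (X (Function.update b i f) c * X (Function.update c i (b i)) a)))).symm).trans ?_
  rw [inv_reindex i (fun b f => ∑ c : Kt n dim, ∑ a : Kt n dim,
      (ρ i (a i) (b i) * Rmat ρ i a b) *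
        (ρ i (c i) f * (X (Function.update b i f) c * X (Function.update c i (b i)) a)))]
  simp only [Function.update_self, Function.update_idem, Function.update_eq_self,
    Rmat_update_right]
  refine (Finset.sum_congr rfl fun b _ => sum_rotate _).trans ?_
  refine (sum_rotate _).trans ?_
  refine (sum_rotate _).trans ?_
  unfold Mform
  apply Finset.sum_congr rfl; intro a _
  apply Finset.sum_congr rfl; intro b _
  apply Finset.sum_congr rfl; intro c _
  apply Finset.sum_congr rfl; intro t _
  ring

end QLV4

namespace QLV5
open QLV QLV2 QLV3 QLV4

variable {n : ℕ} {dim : Fin n → ℕ} (ρ : ∀ i, Matrix (Fin (dim i)) (Fin (dim i)) ℂ)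
variable (htr : ∀ j, (ρ j).trace = 1) (X : Matrix (Kt n dim) (Kt n dim) ℂ) (i : Fin n)

local notation "P" => tensorSq (prodState ρ)
local notation "F" => (Fswap i : Matrix (KK n dim) (KK n dim) ℂ)
local notation "T" => (tensId X : Matrix (KK n dim) (KK n dim) ℂ)

lemma trace_P_FQF (Q : Matrix (KK n dim) (KK n dim) ℂ) :
    (P * (F * Q * F)).trace = (P * Q).trace := by
  have h1 : P * (F * Q * F) = F * (P * (Q * F)) := by
    rw [mul_assoc F Q F, ← mul_assoc (P) F (Q*F), ← Fswap_comm_tensorSq ρ i, mul_assoc]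
  rw [h1, Matrix.trace_mul_comm, mul_assoc, mul_assoc, Fswap_Fswap, mul_one]

include htr in
lemma trace_P_TT : (P * (T * T)).trace = (prodState ρ * (X * X)).trace := by
  rw [tensId_mul_tensId, trace_tensorSq_tensId, traceϱ ρ htr, mul_one]

/-- the statement's cross-trace. -/
def Cval : ℂ := (P * (T * F * T * F)).trace

lemma trace_P_GT : (P * ((F * T * F) * T)).trace = Cval ρ X i := by
  have h1 : P * ((F * T * F) * T) = F * (P * (T * F * T)) := by
    rw [show (F * T * F) * T = F * (T * F * T) from by noncomm_ring,
      ← mul_assoc (P) F (T * F * T), ← Fswap_comm_tensorSq ρ i, mul_assoc]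
  rw [Cval, h1, Matrix.trace_mul_comm, mul_assoc]

lemma trace_P_TG : (P * (T * (F * T * F))).trace = Cval ρ X i := by
  rw [Cval, show T * (F * T * F) = T * F * T * F from by noncomm_ring]

include htr in
lemma trace_P_GG : (P * ((F * T * F) * (F * T * F))).trace
    = (prodState ρ * (X * X)).trace := by
  have h1 : (F * T * F) * (F * T * F) = F * (T * (F * F) * T) * F := by noncomm_ring
  rw [h1, Fswap_Fswap, mul_one]
  rw [trace_P_FQF ρ i, trace_P_TT ρ htr X]

lemma Cpp_eq_C : ((F * T) * ((F * T) * P)).trace = Cval ρ X i := by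
  rw [show (F * T) * ((F * T) * P) = ((F * T) * (F * T)) * P from by noncomm_ring,
    Matrix.trace_mul_comm]
  have h1 : P * ((F * T) * (F * T)) = F * (P * (T * F * T)) := by
    rw [show (F * T) * (F * T) = F * (T * F * T) from by noncomm_ring,
      ← mul_assoc (P) F (T * F * T), ← Fswap_comm_tensorSq ρ i, mul_assoc]
  rw [h1, Matrix.trace_mul_comm, mul_assoc, Cval]

include htr in
lemma rhs1_eq : (P * ((1 / 2 : ℂ) • ((T - F * T * F) * (T - F * T * F)))).trace
    = (prodState ρ * (X * X)).trace - Cval ρ X i := by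
  rw [Matrix.mul_smul, Matrix.trace_smul]
  have h1 : (T - F * T * F) * (T - F * T * F)
      = T * T - T * (F * T * F) - ((F * T * F) * T - (F * T * F) * (F * T * F)) := by
    noncomm_ring
  rw [h1, Matrix.mul_sub, Matrix.mul_sub, Matrix.mul_sub, Matrix.trace_sub, Matrix.trace_sub,
    Matrix.trace_sub, trace_P_TT ρ htr, trace_P_TG, trace_P_GT, trace_P_GG ρ htr]
  rw [smul_eq_mul]
  ring

end QLV5

/-- The two expressions for `Tr[ϱ (D_i X)²]` on the doubled space. -/
theorem quantum_local_variance_formulas (n : ℕ) (hn : 1 ≤ n) (dim : Fin n → ℕ)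
    (ρ : ∀ i, Matrix (Fin (dim i)) (Fin (dim i)) ℂ)
    (hρ : ∀ i, IsState (ρ i))
    (X : Matrix (∀ j, Fin (dim j)) (∀ j, Fin (dim j)) ℂ) (hX : X.IsHermitian)
    (i : Fin n) :
    (prodState ρ * (Dmap ρ i X * Dmap ρ i X)).trace =
      (tensorSq (prodState ρ) *
        ((1 / 2 : ℂ) • ((tensId X - Fswap i * tensId X * Fswap i) *
          (tensId X - Fswap i * tensId X * Fswap i)))).trace ∧
    (prodState ρ * (Dmap ρ i X * Dmap ρ i X)).trace =
      (prodState ρ * (X * X)).trace -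
      (tensorSq (prodState ρ) * (tensId X * Fswap i * tensId X * Fswap i)).trace := by
  classical
  have htr : ∀ j, (ρ j).trace = 1 := fun j => (hρ j).2
  have hexp : (prodState ρ * (Dmap ρ i X * Dmap ρ i X)).trace
      = (prodState ρ * (X * X)).trace - (prodState ρ * (X * Emap ρ i X)).trace
        - (prodState ρ * (Emap ρ i X * X)).trace
        + (prodState ρ * (Emap ρ i X * Emap ρ i X)).trace := by
    unfold Dmap
    rw [show (X - Emap ρ i X) * (X - Emap ρ i X)
        = X * X - X * Emap ρ i X - (Emap ρ i X * X - Emap ρ i X * Emap ρ i X) from by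
          noncomm_ring]
    rw [Matrix.mul_sub, Matrix.mul_sub, Matrix.mul_sub, Matrix.trace_sub, Matrix.trace_sub,
      Matrix.trace_sub]
    ring
  have hCval : QLV5.Cval ρ X i
      = (tensorSq (prodState ρ) * (tensId X * Fswap i * tensId X * Fswap i)).trace := rfl
  have hL : (prodState ρ * (Dmap ρ i X * Dmap ρ i X)).trace
      = (prodState ρ * (X * X)).trace - QLV5.Cval ρ X i := by
    rw [hexp, QLV4.A_eq_T1 ρ X i, QLV4.B_eq_T2 ρ X i, QLV4.D_eq_T3 ρ htr X i,
      QLV4.T3_eq_M ρ X i, ← QLV4.T2_eq_M ρ X i, hCval, QLV4.C_eq_T1 ρ htr X i]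
    ring
  constructor
  · rw [hL, QLV5.rhs1_eq ρ htr X i]
  · rw [hL, hCval]
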